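/- arXiv:1703.10723 — 5 statements merged into one kernel-verified Lean document; each statement's English description precedes it below -/
import Mathlib

section
/- Let the Euclidean plane ℝ² be coloured in red and blue so that there is no red ℓ₂ and no blue ℓ₅. Then there are no three blue points forming an equilateral triangle with side length 3 whose centre (centroid) is a red point. -/
/-- The two colours. -/
inductive Color
  | red
  | blue

/-- The Euclidean plane ℝ². -/
abbrev Plane : Type := EuclideanSpace ℝ (Fin 2)

/-- The point of the plane with coordinates `(x, y)`. -/
noncomputable def pt (x y : ℝ) : Plane := (WithLp.equiv 2 (Fin 2 → ℝ)).symm ![x, y]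

/-- There is no red ℓ₂, i.e. no two red points at Euclidean distance 1. -/
def NoRedL2 (c : Plane → Color) : Prop :=
  ∀ x y : Plane, c x = Color.red → c y = Color.red → dist x y ≠ 1

/-- There is a blue ℓ₅: a point `p` and a unit vector `w` such that
`p, p+w, p+2w, p+3w, p+4w` are all blue. -/
def HasBlueL5 (c : Plane → Color) : Prop :=
  ∃ p w : Plane, ‖w‖ = 1 ∧ ∀ i : Fin 5, c (p + (i : ℝ) • w) = Color.blue

/-- no red ℓ₂ and no blue ℓ₅ imply there are no three blue points
forming an equilateral triangle of side length 3 with a red centroid. -/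
theorem stmt_1 (c : Plane → Color) (hred : NoRedL2 c) (hblue : ¬ HasBlueL5 c) :
    ¬ ∃ A B C : Plane,
        c A = Color.blue ∧ c B = Color.blue ∧ c C = Color.blue ∧
        dist A B = 3 ∧ dist B C = 3 ∧ dist A C = 3 ∧
        c ((3⁻¹ : ℝ) • (A + B + C)) = Color.red := by
  rintro ⟨A, B, C, hA, hB, hC, hAB, hBC, hAC, hO⟩
  set O : Plane := (3⁻¹ : ℝ) • (A + B + C) with hOdef
  have hn : ∀ v : Plane, ‖v‖ = 3 → ‖(3⁻¹ : ℝ) • v‖ = 1 := by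
    intro v hv
    rw [norm_smul, hv]
    norm_num
  have key : ∀ x : Plane, dist O x = 1 → c x = Color.blue := by
    intro x hx
    cases h : c x with
    | red => exact absurd hx (hred O x hO h)
    | blue => rfl
  have main : ∀ X Y Z : Plane, O = (3⁻¹ : ℝ) • (X + Y + Z) →
      c X = Color.blue → c Y = Color.blue →
      dist X Y = 3 → dist X Z = 3 → dist Y Z = 3 →
      c (X - (3⁻¹ : ℝ) • (Y - X)) = Color.red := by
    intro X Y Z hOe hX hY hXY hXZ hYZ
    cases hP : c (X - (3⁻¹ : ℝ) • (Y - X)) with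
    | red => rfl
    | blue =>
      exfalso
      apply hblue
      refine ⟨X - (3⁻¹ : ℝ) • (Y - X), (3⁻¹ : ℝ) • (Y - X), ?_, ?_⟩
      · exact hn _ (by rw [← dist_eq_norm']; exact hXY)
      · intro i
        fin_cases i
        · convert hP using 2
          push_cast
          module
        · convert hX using 2
          push_cast
          module
        · show c (X - (3⁻¹ : ℝ) • (Y - X) + (2 : ℝ) • ((3⁻¹ : ℝ) • (Y - X))) = Color.blue
          apply key
          rw [dist_eq_norm]
          have h2 : O - (X - (3⁻¹ : ℝ) • (Y - X) + (2 : ℝ) • ((3⁻¹ : ℝ) • (Y - X)))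
              = (3⁻¹ : ℝ) • (Z - X) := by rw [hOe]; module
          rw [h2]
          exact hn _ (by rw [← dist_eq_norm']; exact hXZ)
        · show c (X - (3⁻¹ : ℝ) • (Y - X) + (3 : ℝ) • ((3⁻¹ : ℝ) • (Y - X))) = Color.blue
          apply key
          rw [dist_eq_norm]
          have h3 : O - (X - (3⁻¹ : ℝ) • (Y - X) + (3 : ℝ) • ((3⁻¹ : ℝ) • (Y - X)))
              = (3⁻¹ : ℝ) • (Z - Y) := by rw [hOe]; module
          rw [h3]
          exact hn _ (by rw [← dist_eq_norm']; exact hYZ)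
        · convert hY using 2
          push_cast
          module
  have hP : c (A - (3⁻¹ : ℝ) • (B - A)) = Color.red :=
    main A B C rfl hA hB hAB hAC hBC
  have hQ : c (A - (3⁻¹ : ℝ) • (C - A)) = Color.red :=
    main A C B (by rw [hOdef]; module) hA hC hAC hAB (by rw [dist_comm]; exact hBC)
  apply hred _ _ hP hQ
  rw [dist_eq_norm]
  have : (A - (3⁻¹ : ℝ) • (B - A)) - (A - (3⁻¹ : ℝ) • (C - A)) = (3⁻¹ : ℝ) • (C - B) := by
    module
  rw [this]
  exact hn _ (by rw [← dist_eq_norm']; exact hBC)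
end

section
/- Let the Euclidean plane ℝ² be coloured in red and blue so that there is no red ℓ₂ and no blue ℓ₅. Then there are no three red points forming an equilateral triangle with side length √3 whose centre (centroid) is a red point. -/
/-- no red ℓ₂ and no blue ℓ₅ imply there are no three red points
forming an equilateral triangle of side length √3 with a red centroid. -/
theorem stmt_2 (c : Plane → Color) (hred : NoRedL2 c) (hblue : ¬ HasBlueL5 c) :
    ¬ ∃ A B C : Plane,
        c A = Color.red ∧ c B = Color.red ∧ c C = Color.red ∧
        dist A B = Real.sqrt 3 ∧ dist B C = Real.sqrt 3 ∧ dist A C = Real.sqrt 3 ∧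
        c ((3⁻¹ : ℝ) • (A + B + C)) = Color.red := by
  rintro ⟨A, B, C, hA, hB, hC, hAB, hBC, hAC, hO⟩
  apply hred A ((3⁻¹ : ℝ) • (A + B + C)) hA hO
  have h3 : (0:ℝ) ≤ 3 := by norm_num
  have hu : ‖A - B‖ ^ 2 = 3 := by
    rw [← dist_eq_norm, hAB, Real.sq_sqrt h3]
  have hv : ‖A - C‖ ^ 2 = 3 := by
    rw [← dist_eq_norm, hAC, Real.sq_sqrt h3]
  have hw : ‖(A - B) - (A - C)‖ ^ 2 = 3 := by
    have : (A - B) - (A - C) = -(B - C) := by abel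
    rw [this, norm_neg, ← dist_eq_norm, hBC, Real.sq_sqrt h3]
  have hinner : (inner ℝ (A - B) (A - C) : ℝ) = 3 / 2 := by
    have := norm_sub_sq_real (A - B) (A - C)
    nlinarith [this]
  have hadd : ‖(A - B) + (A - C)‖ ^ 2 = 9 := by
    rw [norm_add_sq_real, hu, hv, hinner]; ring
  have hadd' : ‖(A - B) + (A - C)‖ = 3 := by
    nlinarith [norm_nonneg ((A - B) + (A - C))]
  have hdecomp : A - (3⁻¹ : ℝ) • (A + B + C) = (3⁻¹ : ℝ) • ((A - B) + (A - C)) := by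
    module
  rw [dist_eq_norm, hdecomp, norm_smul, hadd']
  norm_num
end

section
/- Let the Euclidean plane ℝ² be coloured in red and blue so that there is no red ℓ₂ and no blue ℓ₅. If A, B, C, D are four red points forming a congruent copy of the configuration 𝔗₄, then there exists a red point E such that the five points A, B, C, D, E form a congruent copy of the configuration 𝔗₅. -/
/-- The configuration 𝔗₄. -/
noncomputable def T4 : Set Plane :=
  {pt 0 0, pt (3 / 2) (Real.sqrt 3 / 2), pt (3 / 2) (-(Real.sqrt 3 / 2)), pt 3 0}

/-- The configuration 𝔗₅. -/
noncomputable def T5 : Set Plane :=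
  {pt 0 0, pt (3 / 2) (Real.sqrt 3 / 2), pt (3 / 2) (-(Real.sqrt 3 / 2)), pt 3 0,
    pt 3 (Real.sqrt 3)}

/-! ### Auxiliary lemmas about `pt` -/

lemma pt_app0 (a b : ℝ) : pt a b 0 = a := rfl
lemma pt_app1 (a b : ℝ) : pt a b 1 = b := rfl

lemma pt_add (a b a' b' : ℝ) : pt a b + pt a' b' = pt (a + a') (b + b') := by
  ext i; fin_cases i <;> rfl

lemma pt_smul (r a b : ℝ) : r • pt a b = pt (r * a) (r * b) := by
  ext i; fin_cases i <;> rfl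

lemma dist_pt (a b a' b' : ℝ) :
    dist (pt a b) (pt a' b') = Real.sqrt ((a - a') ^ 2 + (b - b') ^ 2) := by
  rw [EuclideanSpace.dist_eq, Fin.sum_univ_two]
  simp [pt_app0, pt_app1, Real.dist_eq, sq_abs]

lemma norm_pt (a b : ℝ) : ‖pt a b‖ = Real.sqrt (a ^ 2 + b ^ 2) := by
  rw [EuclideanSpace.norm_eq, Fin.sum_univ_two]
  simp [pt_app0, pt_app1, sq_abs]

lemma dist_pt_one (a b a' b' : ℝ) (h : (a - a') ^ 2 + (b - b') ^ 2 = 1) :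
    dist (pt a b) (pt a' b') = 1 := by rw [dist_pt, h, Real.sqrt_one]

lemma norm_pt_one (a b : ℝ) (h : a ^ 2 + b ^ 2 = 1) : ‖pt a b‖ = 1 := by
  rw [norm_pt, h, Real.sqrt_one]

lemma pt_congr {a b a' b' : ℝ} (h1 : a = a') (h2 : b = b') : pt a b = pt a' b' := by
  rw [h1, h2]

/-! ### Colour lemmas -/

lemma color_eq_blue {v : Color} (h : v ≠ Color.red) : v = Color.blue := by
  cases v <;> simp_all

lemma color_eq_red {v : Color} (h : v ≠ Color.blue) : v = Color.red := by
  cases v <;> simp_all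

section Five
variable {d : Plane → Color}

lemma five (hkey : ∀ p w : Plane, ‖w‖ = 1 → ∃ i : Fin 5, d (p + (i : ℝ) • w) ≠ Color.blue)
    (p w : Plane) (hw : ‖w‖ = 1) (h0 : d p = Color.blue) (h1 : d (p + w) = Color.blue)
    (h2 : d (p + (2:ℝ) • w) = Color.blue) (h3 : d (p + (3:ℝ) • w) = Color.blue)
    (h4 : d (p + (4:ℝ) • w) = Color.blue) : False := by
  obtain ⟨i, hi⟩ := hkey p w hw
  fin_cases i <;> norm_num at hi <;> simp_all

lemma force (hkey : ∀ p w : Plane, ‖w‖ = 1 → ∃ i : Fin 5, d (p + (i : ℝ) • w) ≠ Color.blue)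
    (p w : Plane) (hw : ‖w‖ = 1) (h0 : d p = Color.blue) (h1 : d (p + w) = Color.blue)
    (h2 : d (p + (2:ℝ) • w) = Color.blue) (h3 : d (p + (3:ℝ) • w) = Color.blue) :
    d (p + (4:ℝ) • w) = Color.red :=
  color_eq_red (fun h4 => five hkey p w hw h0 h1 h2 h3 h4)

end Five

/-- The key combinatorial lemma: if the four points of `T4` are red, there is no red
unit pair and no blue ℓ₅, then one of the three points `(3,√3)`, `(3,−√3)`, `(0,−√3)`
is red. -/
lemma main_lemma (d : Plane → Color)
    (hred : ∀ x y : Plane, d x = Color.red → d y = Color.red → dist x y ≠ 1)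
    (hkey : ∀ p w : Plane, ‖w‖ = 1 → ∃ i : Fin 5, d (p + (i : ℝ) • w) ≠ Color.blue)
    (hQ : d (pt (3/2) (-(Real.sqrt 3/2))) = Color.red)
    (hR : d (pt 3 0) = Color.red) :
    d (pt 3 (Real.sqrt 3)) = Color.red ∨ d (pt 3 (-(Real.sqrt 3))) = Color.red ∨
      d (pt 0 (-(Real.sqrt 3))) = Color.red := by
  by_contra hcon
  push_neg at hcon
  obtain ⟨n1, n2, n4⟩ := hcon
  have hS1 := color_eq_blue n1
  have hS2 := color_eq_blue n2
  have hS4 := color_eq_blue n4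
  have hs : Real.sqrt 3 ^ 2 = 3 := Real.sq_sqrt (by norm_num)
  have bl : ∀ x a b, d x = Color.red → dist x (pt a b) = 1 → d (pt a b) = Color.blue :=
    fun x a b hx hd => color_eq_blue (fun hy => hred x _ hx hy hd)
  -- row y = -√3 : points (0,-√3),(1,-√3),(2,-√3),(3,-√3) are blue ⇒ (4, -√3) is red
  have b1 : d (pt 1 (-(Real.sqrt 3))) = Color.blue :=
    bl _ _ _ hQ (dist_pt_one _ _ _ _ (by nlinarith [hs]))
  have b2 : d (pt 2 (-(Real.sqrt 3))) = Color.blue :=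
    bl _ _ _ hQ (dist_pt_one _ _ _ _ (by nlinarith [hs]))
  have hr4 : d (pt 4 (-(Real.sqrt 3))) = Color.red := by
    have e4 : pt 0 (-(Real.sqrt 3)) + (4:ℝ) • pt 1 0 = pt 4 (-(Real.sqrt 3)) := by
      rw [pt_smul, pt_add]; exact pt_congr (by norm_num) (by ring)
    rw [← e4]
    refine force hkey _ _ (norm_pt_one _ _ (by norm_num)) hS4 ?_ ?_ ?_
    · rw [pt_add, show ((0:ℝ)+1) = 1 by norm_num, show -(Real.sqrt 3) + 0 = -(Real.sqrt 3) by ring]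
      exact b1
    · rw [pt_smul, pt_add, show ((0:ℝ)+2*1) = 2 by norm_num,
        show -(Real.sqrt 3) + 2*0 = -(Real.sqrt 3) by ring]
      exact b2
    · rw [pt_smul, pt_add, show ((0:ℝ)+3*1) = 3 by norm_num,
        show -(Real.sqrt 3) + 3*0 = -(Real.sqrt 3) by ring]
      exact hS2
  -- the line from (3,√3) to (5,-√3), with unit steps, is all blue: contradiction
  have c1 : d (pt (7/2) (Real.sqrt 3/2)) = Color.blue :=
    bl _ _ _ hR (dist_pt_one _ _ _ _ (by nlinarith [hs]))
  have c2 : d (pt 4 0) = Color.blue :=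
    bl _ _ _ hR (dist_pt_one _ _ _ _ (by norm_num))
  have c3 : d (pt (9/2) (-(Real.sqrt 3/2))) = Color.blue :=
    bl _ _ _ hr4 (dist_pt_one _ _ _ _ (by nlinarith [hs]))
  have c4 : d (pt 5 (-(Real.sqrt 3))) = Color.blue :=
    bl _ _ _ hr4 (dist_pt_one _ _ _ _ (by norm_num))
  refine five hkey (pt 3 (Real.sqrt 3)) (pt (1/2) (-(Real.sqrt 3/2)))
    (norm_pt_one _ _ (by nlinarith [hs])) hS1 ?_ ?_ ?_ ?_
  · rw [pt_add, show ((3:ℝ)+1/2) = 7/2 by norm_num,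
      show Real.sqrt 3 + -(Real.sqrt 3/2) = Real.sqrt 3/2 by ring]
    exact c1
  · rw [pt_smul, pt_add, show ((3:ℝ)+2*(1/2)) = 4 by norm_num,
      show Real.sqrt 3 + 2*(-(Real.sqrt 3/2)) = 0 by ring]
    exact c2
  · rw [pt_smul, pt_add, show ((3:ℝ)+3*(1/2)) = 9/2 by norm_num,
      show Real.sqrt 3 + 3*(-(Real.sqrt 3/2)) = -(Real.sqrt 3/2) by ring]
    exact c3
  · rw [pt_smul, pt_add, show ((3:ℝ)+4*(1/2)) = 5 by norm_num,
      show Real.sqrt 3 + 4*(-(Real.sqrt 3/2)) = -(Real.sqrt 3) by ring]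
    exact c4

/-! ### Symmetries of `T4` -/

/-- Reflection across the `x`-axis. -/
noncomputable def sigma2 : Plane ≃ᵢ Plane :=
  ⟨⟨fun p => pt (p 0) (-(p 1)), fun p => pt (p 0) (-(p 1)),
    fun p => by ext i; fin_cases i <;> simp [pt_app0, pt_app1],
    fun p => by ext i; fin_cases i <;> simp [pt_app0, pt_app1]⟩,
   Isometry.of_dist_eq (fun x y => by
    simp only [Equiv.coe_fn_mk]
    rw [dist_pt, EuclideanSpace.dist_eq, Fin.sum_univ_two]
    simp [Real.dist_eq, sq_abs]
    ring_nf)⟩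

/-- Point reflection about `(3/2, 0)`. -/
noncomputable def sigma4 : Plane ≃ᵢ Plane :=
  ⟨⟨fun p => pt (3 - p 0) (-(p 1)), fun p => pt (3 - p 0) (-(p 1)),
    fun p => by ext i; fin_cases i <;> simp [pt_app0, pt_app1],
    fun p => by ext i; fin_cases i <;> simp [pt_app0, pt_app1]⟩,
   Isometry.of_dist_eq (fun x y => by
    simp only [Equiv.coe_fn_mk]
    rw [dist_pt, EuclideanSpace.dist_eq, Fin.sum_univ_two]
    simp [Real.dist_eq, sq_abs]
    ring_nf)⟩

lemma sigma2_pt (a b : ℝ) : sigma2 (pt a b) = pt a (-b) := rfl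
lemma sigma4_pt (a b : ℝ) : sigma4 (pt a b) = pt (3 - a) (-b) := rfl

lemma T5_eq : T5 = T4 ∪ {pt 3 (Real.sqrt 3)} := by
  ext x; simp [T4, T5, or_assoc]; tauto

lemma sigma2_T4 : sigma2 '' T4 = T4 := by
  rw [T4, Set.image_insert_eq, Set.image_insert_eq, Set.image_insert_eq, Set.image_singleton,
    sigma2_pt, sigma2_pt, sigma2_pt, sigma2_pt,
    pt_congr (rfl : (0:ℝ) = 0) (neg_zero), pt_congr (rfl : (3:ℝ) = 3) (neg_zero),
    pt_congr (rfl : (3/2:ℝ) = 3/2) (neg_neg (Real.sqrt 3 / 2))]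
  exact congrArg (insert (pt 0 0)) (Set.insert_comm _ _ _)

lemma sigma4_T4 : sigma4 '' T4 = T4 := by
  rw [T4, Set.image_insert_eq, Set.image_insert_eq, Set.image_insert_eq, Set.image_singleton,
    sigma4_pt, sigma4_pt, sigma4_pt, sigma4_pt,
    pt_congr (by norm_num : (3:ℝ) - 0 = 3) (neg_zero),
    pt_congr (by norm_num : (3:ℝ) - 3/2 = 3/2) (neg_neg (Real.sqrt 3 / 2)),
    pt_congr (by norm_num : (3:ℝ) - 3/2 = 3/2) (rfl : -(Real.sqrt 3/2) = -(Real.sqrt 3/2)),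
    pt_congr (by norm_num : (3:ℝ) - 3 = 0) (neg_zero)]
  ext x; simp [T4]; tauto

/-- no red ℓ₂ and no blue ℓ₅; if A, B, C, D are red points forming
a congruent copy of 𝔗₄, then there is a red point E such that A, B, C, D, E
form a congruent copy of 𝔗₅. -/
theorem stmt_5 (c : Plane → Color) (hred : NoRedL2 c) (hblue : ¬ HasBlueL5 c)
    (A B C D : Plane) (hA : c A = Color.red) (hB : c B = Color.red)
    (hC : c C = Color.red) (hD : c D = Color.red)
    (hcong : ∃ f : Plane ≃ᵢ Plane, f '' T4 = {A, B, C, D}) :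
    ∃ E : Plane, c E = Color.red ∧
      ∃ g : Plane ≃ᵢ Plane, g '' T5 = {A, B, C, D, E} := by
  obtain ⟨f, hf⟩ := hcong
  set d : Plane → Color := fun p => c (f p) with hd
  have hdred : ∀ x y : Plane, d x = Color.red → d y = Color.red → dist x y ≠ 1 := by
    intro x y hx hy
    have := hred (f x) (f y) hx hy
    rwa [f.dist_eq] at this
  have hdkey : ∀ p w : Plane, ‖w‖ = 1 → ∃ i : Fin 5, d (p + (i : ℝ) • w) ≠ Color.blue := by
    intro p w hw
    by_contra hcon
    push_neg at hcon
    apply hblue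
    set L := f.toRealLinearIsometryEquiv with hL
    have hfa : ∀ x : Plane, f x = L x + f 0 := fun x => by
      rw [hL, IsometryEquiv.toRealLinearIsometryEquiv_apply, sub_add_cancel]
    refine ⟨f p, L w, by rw [L.norm_map]; exact hw, fun i => ?_⟩
    have : f p + (i : ℝ) • L w = f (p + (i : ℝ) • w) := by
      rw [hfa (p + (i : ℝ) • w), map_add, map_smul, hfa p]; abel
    rw [this]
    exact hcon i
  have hmem : ∀ z ∈ T4, d z = Color.red := by
    intro z hz
    have hz' : f z ∈ ({A, B, C, D} : Set Plane) := by
      rw [← hf]; exact ⟨z, hz, rfl⟩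
    simp only [Set.mem_insert_iff, Set.mem_singleton_iff] at hz'
    rcases hz' with h | h | h | h <;> simp [hd, h, hA, hB, hC, hD]
  have hQ : d (pt (3/2) (-(Real.sqrt 3/2))) = Color.red := by
    apply hmem; rw [T4]; norm_num
  have hR : d (pt 3 0) = Color.red := by
    apply hmem; rw [T4]; norm_num
  have himg : ∀ g : Plane ≃ᵢ Plane, g '' T5 = g '' T4 ∪ {g (pt 3 (Real.sqrt 3))} := by
    intro g
    rw [T5_eq, Set.image_union, Set.image_singleton]
  have hfinal : ∀ E : Plane, {A, B, C, D} ∪ {E} = ({A, B, C, D, E} : Set Plane) := by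
    intro E; ext x; simp; tauto
  rcases main_lemma d hdred hdkey hQ hR with h | h | h
  · exact ⟨f (pt 3 (Real.sqrt 3)), h, f, by rw [himg, hf, hfinal]⟩
  · refine ⟨f (pt 3 (-(Real.sqrt 3))), h, sigma2.trans f, ?_⟩
    rw [himg, show ⇑(sigma2.trans f) = (⇑f ∘ ⇑sigma2) from rfl, Set.image_comp, sigma2_T4, hf,
      Function.comp_apply, sigma2_pt, hfinal]
  · refine ⟨f (pt 0 (-(Real.sqrt 3))), h, sigma4.trans f, ?_⟩
    rw [himg, show ⇑(sigma4.trans f) = (⇑f ∘ ⇑sigma4) from rfl, Set.image_comp, sigma4_T4, hf,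
      Function.comp_apply, sigma4_pt, pt_congr (by norm_num : (3:ℝ) - 3 = 0) rfl, hfinal]
end

section
/- Let the Euclidean plane ℝ² be coloured in red and blue so that there is no red ℓ₂ and no blue ℓ₅. Let 𝔏 = {p + m·u + n·v : m, n ∈ ℤ} be a unit triangular lattice (u, v unit vectors with ⟨u,v⟩ = 1/2), and suppose 𝔏 does not contain three red points forming an equilateral triangle with side length √3. If A and B are red points of 𝔏 with Euclidean distance |AB| = √3, then every lattice point on the line through A and B is red; that is, A + k·(B − A) is red for every integer k. -/
lemma eq_one_of_sq' {r : ℝ} (h : r ^ 2 = 1) (h0 : 0 ≤ r) : r = 1 := by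
  have h1 : (r - 1) * (r + 1) = 0 := by linear_combination h
  rcases mul_eq_zero.1 h1 with h2 | h2 <;> linarith

lemma blue_of_ne_red {c : Plane → Color} {x : Plane} (h : c x ≠ Color.red) :
    c x = Color.blue := by
  cases hx : c x
  · exact absurd hx h
  · rfl

lemma inner_comb (u v : Plane) (hu : ‖u‖ = 1) (hv : ‖v‖ = 1)
    (huv : (inner ℝ u v : ℝ) = 1 / 2) (a b a' b' : ℝ) :
    (inner ℝ (a • u + b • v) (a' • u + b' • v) : ℝ)
      = a * a' + (a * b' + a' * b) / 2 + b * b' := by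
  have huu : (inner ℝ u u : ℝ) = 1 := by
    rw [real_inner_self_eq_norm_sq, hu]; norm_num
  have hvv : (inner ℝ v v : ℝ) = 1 := by
    rw [real_inner_self_eq_norm_sq, hv]; norm_num
  have hvu : (inner ℝ v u : ℝ) = 1 / 2 := by rw [real_inner_comm]; exact huv
  simp only [inner_add_left, inner_add_right, real_inner_smul_left, real_inner_smul_right,
    huu, hvv, huv, hvu]
  ring

lemma norm_comb_sq (u v : Plane) (hu : ‖u‖ = 1) (hv : ‖v‖ = 1)
    (huv : (inner ℝ u v : ℝ) = 1 / 2) (a b : ℝ) :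
    ‖a • u + b • v‖ ^ 2 = a ^ 2 + a * b + b ^ 2 := by
  rw [← real_inner_self_eq_norm_sq, inner_comb u v hu hv huv]
  ring

lemma step (c : Plane → Color) (hred : NoRedL2 c) (hblue : ¬ HasBlueL5 c)
    (u v A : Plane) (hu : ‖u‖ = 1) (hv : ‖v‖ = 1) (huv : (inner ℝ u v : ℝ) = 1 / 2)
    (hA : c A = Color.red) (hB : c (A + u + v) = Color.red)
    (hC : c (A + (2:ℝ) • u - v) ≠ Color.red)
    (hC' : c (A + (2:ℝ) • v - u) ≠ Color.red) :
    c (A + (2:ℝ) • u + (2:ℝ) • v) = Color.red := by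
  have nred : ∀ X Y : Plane, c X = Color.red → ‖X - Y‖ = 1 → c Y ≠ Color.red :=
    fun X Y hX hXY hY => hred X Y hX hY (by rwa [dist_eq_norm])
  have huv1 : ‖u - v‖ = 1 := by
    refine eq_one_of_sq' ?_ (norm_nonneg _)
    have h := norm_comb_sq u v hu hv huv 1 (-1)
    rw [show (1:ℝ) • u + (-1:ℝ) • v = u - v by module] at h
    rw [h]; ring
  have hAu : c (A + u) ≠ Color.red :=
    nred A _ hA (by rw [show A - (A + u) = -u by module, norm_neg, hu])
  have hAv : c (A + v) ≠ Color.red :=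
    nred A _ hA (by rw [show A - (A + v) = -v by module, norm_neg, hv])
  have hD' : c (A + (3:ℝ) • v - (2:ℝ) • u) = Color.red := by
    by_contra hD'
    apply hblue
    refine ⟨A + (3:ℝ) • v - (2:ℝ) • u, u - v, huv1, ?_⟩
    intro i
    fin_cases i <;> push_cast <;> apply blue_of_ne_red
    · rw [show A + (3:ℝ) • v - (2:ℝ) • u + (0:ℝ) • (u - v) = A + (3:ℝ) • v - (2:ℝ) • u
        by module]
      exact hD'
    · rw [show A + (3:ℝ) • v - (2:ℝ) • u + (1:ℝ) • (u - v) = A + (2:ℝ) • v - u by module]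
      exact hC'
    · rw [show A + (3:ℝ) • v - (2:ℝ) • u + (2:ℝ) • (u - v) = A + v by module]
      exact hAv
    · rw [show A + (3:ℝ) • v - (2:ℝ) • u + (3:ℝ) • (u - v) = A + u by module]
      exact hAu
    · rw [show A + (3:ℝ) • v - (2:ℝ) • u + (4:ℝ) • (u - v) = A + (2:ℝ) • u - v by module]
      exact hC
  have hE : c (A + (2:ℝ) • v - (2:ℝ) • u) ≠ Color.red :=
    nred _ _ hD' (by
      rw [show (A + (3:ℝ) • v - (2:ℝ) • u) - (A + (2:ℝ) • v - (2:ℝ) • u) = v by module, hv])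
  by_contra hT
  apply hblue
  refine ⟨A + (2:ℝ) • v - (2:ℝ) • u, u, hu, ?_⟩
  intro i
  fin_cases i <;> push_cast <;> apply blue_of_ne_red
  · rw [show A + (2:ℝ) • v - (2:ℝ) • u + (0:ℝ) • u = A + (2:ℝ) • v - (2:ℝ) • u by module]
    exact hE
  · rw [show A + (2:ℝ) • v - (2:ℝ) • u + (1:ℝ) • u = A + (2:ℝ) • v - u by module]
    exact hC'
  · rw [show A + (2:ℝ) • v - (2:ℝ) • u + (2:ℝ) • u = A + (2:ℝ) • v by module]
    exact nred _ _ hB (by rw [show (A + u + v) - (A + (2:ℝ) • v) = u - v by module, huv1])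
  · rw [show A + (2:ℝ) • v - (2:ℝ) • u + (3:ℝ) • u = A + u + v + v by module]
    exact nred _ _ hB (by rw [show (A + u + v) - (A + u + v + v) = -v by module, norm_neg, hv])
  · rw [show A + (2:ℝ) • v - (2:ℝ) • u + (4:ℝ) • u = A + (2:ℝ) • u + (2:ℝ) • v by module]
    exact hT
lemma int_cases3 (a b : ℤ) (h : a^2 + a*b + b^2 = 3) :
    (a = 1 ∧ b = 1) ∨ (a = -1 ∧ b = -1) ∨ (a = 2 ∧ b = -1) ∨ (a = -2 ∧ b = 1) ∨
    (a = -1 ∧ b = 2) ∨ (a = 1 ∧ b = -2) := by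
  have ha : a^2 ≤ 4 := by nlinarith [sq_nonneg (a + 2*b)]
  have hb : b^2 ≤ 4 := by nlinarith [sq_nonneg (2*a + b)]
  have ha1 : -2 ≤ a := by nlinarith
  have ha2 : a ≤ 2 := by nlinarith
  have hb1 : -2 ≤ b := by nlinarith
  have hb2 : b ≤ 2 := by nlinarith
  interval_cases a <;> interval_cases b <;> omega

lemma decomp (a b : ℤ) (h : a^2 + a*b + b^2 = 3) :
    ∃ a₁ b₁ a₂ b₂ : ℤ, a₁ + a₂ = a ∧ b₁ + b₂ = b ∧
      a₁^2 + a₁*b₁ + b₁^2 = 1 ∧ a₂^2 + a₂*b₂ + b₂^2 = 1 ∧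
      2*(a₁*a₂) + a₁*b₂ + a₂*b₁ + 2*(b₁*b₂) = 1 := by
  rcases int_cases3 a b h with ⟨rfl, rfl⟩ | ⟨rfl, rfl⟩ | ⟨rfl, rfl⟩ | ⟨rfl, rfl⟩ |
    ⟨rfl, rfl⟩ | ⟨rfl, rfl⟩
  · exact ⟨1, 0, 0, 1, by norm_num⟩
  · exact ⟨-1, 0, 0, -1, by norm_num⟩
  · exact ⟨1, 0, 1, -1, by norm_num⟩
  · exact ⟨-1, 0, -1, 1, by norm_num⟩
  · exact ⟨0, 1, -1, 1, by norm_num⟩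
  · exact ⟨0, -1, 1, -1, by norm_num⟩

lemma extend (c : Plane → Color) (hred : NoRedL2 c) (hblue : ¬ HasBlueL5 c)
    (p u v : Plane) (hu : ‖u‖ = 1) (hv : ‖v‖ = 1) (huv : (inner ℝ u v : ℝ) = 1 / 2)
    (L : Set Plane) (hL : L = {x : Plane | ∃ m n : ℤ, x = p + (m : ℝ) • u + (n : ℝ) • v})
    (hnotri : ¬ ∃ A B C : Plane, A ∈ L ∧ B ∈ L ∧ C ∈ L ∧
      c A = Color.red ∧ c B = Color.red ∧ c C = Color.red ∧
      dist A B = Real.sqrt 3 ∧ dist B C = Real.sqrt 3 ∧ dist A C = Real.sqrt 3)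
    (X : Plane) (a b : ℤ) (hX : X ∈ L) (hab : a^2 + a*b + b^2 = 3)
    (h1 : c X = Color.red) (h2 : c (X + ((a:ℤ):ℝ) • u + ((b:ℤ):ℝ) • v) = Color.red) :
    c (X + ((2*a : ℤ):ℝ) • u + ((2*b : ℤ):ℝ) • v) = Color.red := by
  -- lattice membership of integer translates of X
  have mem : ∀ s t : ℤ, X + (s:ℝ) • u + (t:ℝ) • v ∈ L := by
    rw [hL] at hX ⊢
    obtain ⟨m, n, rfl⟩ := hX
    intro s t
    exact ⟨m + s, n + t, by push_cast; module⟩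
  obtain ⟨a₁, b₁, a₂, b₂, hsa, hsb, hq1, hq2, hcr⟩ := decomp a b hab
  set u' : Plane := (a₁:ℝ) • u + (b₁:ℝ) • v with hu'def
  set v' : Plane := (a₂:ℝ) • u + (b₂:ℝ) • v with hv'def
  have hu' : ‖u'‖ = 1 := by
    refine eq_one_of_sq' ?_ (norm_nonneg _)
    rw [hu'def, norm_comb_sq u v hu hv huv]
    exact_mod_cast congrArg (Int.cast : ℤ → ℝ) hq1
  have hv' : ‖v'‖ = 1 := by
    refine eq_one_of_sq' ?_ (norm_nonneg _)
    rw [hv'def, norm_comb_sq u v hu hv huv]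
    exact_mod_cast congrArg (Int.cast : ℤ → ℝ) hq2
  have huv' : (inner ℝ u' v' : ℝ) = 1 / 2 := by
    rw [hu'def, hv'def, inner_comb u v hu hv huv]
    have : ((2*(a₁*a₂) + a₁*b₂ + a₂*b₁ + 2*(b₁*b₂) : ℤ) : ℝ) = 1 := by exact_mod_cast hcr
    push_cast at this ⊢
    linarith
  have ha : (a₁:ℝ) + a₂ = a := by exact_mod_cast hsa
  have hb : (b₁:ℝ) + b₂ = b := by exact_mod_cast hsb
  -- distance helper
  have dist3 : ∀ (P Q : Plane) (s t : ℝ), Q - P = s • u' + t • v' →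
      s^2 + s*t + t^2 = 3 → dist P Q = Real.sqrt 3 := by
    intro P Q s t hPQ hst
    rw [dist_comm, dist_eq_norm, hPQ,
      show (3:ℝ) = ‖s • u' + t • v'‖^2 by rw [norm_comb_sq u' v' hu' hv' huv', hst],
      Real.sqrt_sq (norm_nonneg _)]
  -- the two triangle-completing points are not red
  have tri : ∀ Z : Plane, Z ∈ L → dist X Z = Real.sqrt 3 →
      dist (X + (a:ℝ) • u + (b:ℝ) • v) Z = Real.sqrt 3 → c Z ≠ Color.red := by
    intro Z hZL hXZ hYZ hZred
    refine hnotri ⟨X, X + (a:ℝ) • u + (b:ℝ) • v, Z, hX, mem a b, hZL, h1, h2, hZred, ?_, hYZ, hXZ⟩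
    refine dist3 _ _ 1 1 ?_ (by norm_num)
    rw [hu'def, hv'def, ← ha, ← hb]; module
  have hXY' : X + (a:ℝ) • u + (b:ℝ) • v = X + u' + v' := by
    rw [hu'def, hv'def, ← ha, ← hb]; module
  have hC : c (X + (2:ℝ) • u' - v') ≠ Color.red := by
    have hZmem : X + (2:ℝ) • u' - v' = X + ((2*a₁ - a₂ : ℤ):ℝ) • u + ((2*b₁ - b₂ : ℤ):ℝ) • v := by
      rw [hu'def, hv'def]; push_cast; module
    refine tri _ (hZmem ▸ mem (2*a₁ - a₂) (2*b₁ - b₂)) ?_ ?_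
    · exact dist3 _ _ 2 (-1) (by module) (by norm_num)
    · refine dist3 _ _ 1 (-2) ?_ (by norm_num)
      rw [hXY']; module
  have hC' : c (X + (2:ℝ) • v' - u') ≠ Color.red := by
    have hZmem : X + (2:ℝ) • v' - u' = X + ((2*a₂ - a₁ : ℤ):ℝ) • u + ((2*b₂ - b₁ : ℤ):ℝ) • v := by
      rw [hu'def, hv'def]; push_cast; module
    refine tri _ (hZmem ▸ mem (2*a₂ - a₁) (2*b₂ - b₁)) ?_ ?_
    · exact dist3 _ _ (-1) 2 (by module) (by norm_num)
    · refine dist3 _ _ (-2) 1 ?_ (by norm_num)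
      rw [hXY']; module
  have hres := step c hred hblue u' v' X hu' hv' huv' h1 (by rw [← hXY']; push_cast at h2 ⊢; exact h2) hC hC'
  rw [show X + ((2*a : ℤ):ℝ) • u + ((2*b : ℤ):ℝ) • v = X + (2:ℝ) • u' + (2:ℝ) • v' by
    rw [hu'def, hv'def]; push_cast; rw [← ha, ← hb]; module]
  exact hres


/-- no red ℓ₂ and no blue ℓ₅; if a unit triangular lattice 𝔏
contains no red equilateral triangle of side √3, and A, B are red points of 𝔏
at distance √3, then every lattice point on the line AB is red. -/
theorem stmt_10 (c : Plane → Color) (hred : NoRedL2 c) (hblue : ¬ HasBlueL5 c)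
    (p u v : Plane) (hu : ‖u‖ = 1) (hv : ‖v‖ = 1) (huv : (inner ℝ u v : ℝ) = 1 / 2)
    (L : Set Plane) (hL : L = {x : Plane | ∃ m n : ℤ, x = p + (m : ℝ) • u + (n : ℝ) • v})
    (hnotri : ¬ ∃ A B C : Plane, A ∈ L ∧ B ∈ L ∧ C ∈ L ∧
      c A = Color.red ∧ c B = Color.red ∧ c C = Color.red ∧
      dist A B = Real.sqrt 3 ∧ dist B C = Real.sqrt 3 ∧ dist A C = Real.sqrt 3)
    (A B : Plane) (hAL : A ∈ L) (hBL : B ∈ L)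
    (hA : c A = Color.red) (hB : c B = Color.red)
    (hAB : dist A B = Real.sqrt 3) :
    ∀ k : ℤ, c (A + (k : ℝ) • (B - A)) = Color.red := by
  have hAL' := hAL
  have hBL' := hBL
  rw [hL] at hAL' hBL'
  obtain ⟨m₁, n₁, hAeq⟩ := hAL'
  obtain ⟨m₂, n₂, hBeq⟩ := hBL'
  set a : ℤ := m₂ - m₁ with hadef
  set b : ℤ := n₂ - n₁ with hbdef
  have hd : B - A = (a:ℝ) • u + (b:ℝ) • v := by
    rw [hAeq, hBeq, hadef, hbdef]; push_cast; module
  have hBeq' : B = A + (a:ℝ) • u + (b:ℝ) • v := by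
    rw [show A + (a:ℝ) • u + (b:ℝ) • v = A + ((a:ℝ) • u + (b:ℝ) • v) by module, ← hd]
    module
  have hab : a^2 + a*b + b^2 = 3 := by
    have h3 : ‖B - A‖^2 = 3 := by
      rw [norm_sub_rev, ← dist_eq_norm, hAB, Real.sq_sqrt (by norm_num : (3:ℝ) ≥ 0)]
    rw [hd, norm_comb_sq u v hu hv huv] at h3
    exact_mod_cast h3
  have memA : ∀ s t : ℤ, A + (s:ℝ) • u + (t:ℝ) • v ∈ L := by
    rw [hL]
    intro s t
    exact ⟨m₁ + s, n₁ + t, by rw [hAeq]; push_cast; module⟩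
  have key : ∀ a' b' : ℤ, a'^2 + a'*b' + b'^2 = 3 →
      c (A + (a':ℝ) • u + (b':ℝ) • v) = Color.red →
      ∀ n : ℕ, c (A + (((n:ℤ)*a' : ℤ):ℝ) • u + (((n:ℤ)*b' : ℤ):ℝ) • v) = Color.red ∧
        c (A + ((((n:ℤ)+1)*a' : ℤ):ℝ) • u + ((((n:ℤ)+1)*b' : ℤ):ℝ) • v) = Color.red := by
    intro a' b' hq hbase n
    induction n with
    | zero =>
      constructor
      · simpa using hA
      · simpa using hbase
    | succ n ih =>
      have hstep := extend c hred hblue p u v hu hv huv L hL hnotri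
        (A + (((n:ℤ)*a' : ℤ):ℝ) • u + (((n:ℤ)*b' : ℤ):ℝ) • v) a' b'
        (memA _ _) hq ih.1
        (by
          rw [show A + (((n:ℤ)*a' : ℤ):ℝ) • u + (((n:ℤ)*b' : ℤ):ℝ) • v + ((a':ℤ):ℝ) • u
              + ((b':ℤ):ℝ) • v = A + ((((n:ℤ)+1)*a' : ℤ):ℝ) • u + ((((n:ℤ)+1)*b' : ℤ):ℝ) • v
            by push_cast; module]
          exact ih.2)
      constructor
      · rw [show A + ((((n+1:ℕ):ℤ)*a' : ℤ):ℝ) • u + ((((n+1:ℕ):ℤ)*b' : ℤ):ℝ) • v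
            = A + ((((n:ℤ)+1)*a' : ℤ):ℝ) • u + ((((n:ℤ)+1)*b' : ℤ):ℝ) • v by push_cast; module]
        exact ih.2
      · rw [show A + (((((n+1:ℕ):ℤ)+1)*a' : ℤ):ℝ) • u + (((((n+1:ℕ):ℤ)+1)*b' : ℤ):ℝ) • v
            = A + (((n:ℤ)*a' : ℤ):ℝ) • u + (((n:ℤ)*b' : ℤ):ℝ) • v + ((2*a' : ℤ):ℝ) • u
              + ((2*b' : ℤ):ℝ) • v by push_cast; module]
        exact hstep
  have hq' : (-a)^2 + (-a)*(-b) + (-b)^2 = 3 := by linear_combination hab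
  have hbase_neg : c (A + ((-a : ℤ):ℝ) • u + ((-b : ℤ):ℝ) • v) = Color.red := by
    have hstep := extend c hred hblue p u v hu hv huv L hL hnotri B (-a) (-b) hBL hq' hB
      (by
        rw [show B + ((-a : ℤ):ℝ) • u + ((-b : ℤ):ℝ) • v = A by rw [hBeq']; push_cast; module]
        exact hA)
    rw [show A + ((-a : ℤ):ℝ) • u + ((-b : ℤ):ℝ) • v
        = B + ((2*(-a) : ℤ):ℝ) • u + ((2*(-b) : ℤ):ℝ) • v by rw [hBeq']; push_cast; module]
    exact hstep
  intro k
  rcases Int.eq_nat_or_neg k with ⟨n, rfl | rfl⟩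
  · rw [show A + (((n:ℕ):ℤ):ℝ) • (B - A) = A + (((n:ℤ)*a : ℤ):ℝ) • u + (((n:ℤ)*b : ℤ):ℝ) • v
      by rw [hd]; push_cast; module]
    exact (key a b hab (by rw [← hBeq']; exact hB) n).1
  · rw [show A + ((-(n:ℕ) : ℤ):ℝ) • (B - A)
        = A + (((n:ℤ)*(-a) : ℤ):ℝ) • u + (((n:ℤ)*(-b) : ℤ):ℝ) • v
      by rw [hd]; push_cast; module]
    exact (key (-a) (-b) hq' hbase_neg n).1
end

section
/- Let the Euclidean plane ℝ² be coloured in red and blue so that there is no red ℓ₂ and no blue ℓ₅. Let 𝔏 = {p + m·u + n·v : m, n ∈ ℤ} be a unit triangular lattice, where u, v are unit vectors with ⟨u,v⟩ = 1/2. Suppose 𝔏 does not contain three red points forming an equilateral triangle with side length √3. Then the colouring of 𝔏 is the unique colouring of Figure 8: there exist a point b ∈ 𝔏 and unit vectors u', v' with ⟨u',v'⟩ = 1/2 and 𝔏 = {b + m·u' + n·v' : m, n ∈ ℤ} such that a point x of 𝔏 is red if and only if x ∈ b + t + m·(2v'−u') + 5k·u' for some m, k ∈ ℤ and some t ∈ {0,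 2u'+v'}; all other points of 𝔏 are blue. -/
/-- Abstract combinatorial data of an admissible colouring of the triangular
lattice `ℤ²` (`f a b` means the lattice point with coordinates `(a,b)` is red). -/
structure Grid where
  f : ℤ → ℤ → Prop
  h1a : ∀ a b, f a b → f (a+1) b → False
  h1b : ∀ a b, f a b → f a (b+1) → False
  h1c : ∀ a b, f a b → f (a+1) (b-1) → False
  h2u : ∀ a b, f a b ∨ f (a+1) b ∨ f (a+2) b ∨ f (a+3) b ∨ f (a+4) b
  h2v : ∀ a b, f a b ∨ f a (b+1) ∨ f a (b+2) ∨ f a (b+3) ∨ f a (b+4)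
  h2w : ∀ a b, f a b ∨ f (a+1) (b-1) ∨ f (a+2) (b-2) ∨ f (a+3) (b-3) ∨ f (a+4) (b-4)
  h3a : ∀ a b, f a b → f (a+1) (b+1) → f (a+2) (b-1) → False
  h3b : ∀ a b, f a b → f (a+1) (b+1) → f (a-1) (b+2) → False

namespace Grid

lemma fc (G : Grid) {a b a' b' : ℤ} (ha : a = a') (hb : b = b') (h : G.f a b) :
    G.f a' b' := ha ▸ hb ▸ h

lemma p2 (G : Grid) (a b : ℤ) (h0 : G.f a b) (h1 : G.f (a+1) (b+1)) :
    G.f (a+3) (b-2) ∧ G.f (a-2) (b+3) := by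
  have B1 : ¬ G.f (a-1) (b+2) := fun h => G.h3b a b h0 h1 h
  have B2 : ¬ G.f a (b+1) := fun h => G.h1b a b h0 h
  have B3 : ¬ G.f (a+1) b := fun h => G.h1a a b h0 h
  have B4 : ¬ G.f (a+2) (b-1) := fun h => G.h3a a b h0 h1 h
  constructor
  · rcases G.h2w (a-1) (b+2) with h|h|h|h|h
    · exact absurd h B1
    · exact absurd (G.fc (by ring) (by ring) h) B2
    · exact absurd (G.fc (by ring) (by ring) h) B3
    · exact absurd (G.fc (by ring) (by ring) h) B4
    · exact G.fc (by ring) (by ring) h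
  · rcases G.h2w (a-2) (b+3) with h|h|h|h|h
    · exact h
    · exact absurd (G.fc (by ring) (by ring) h) B1
    · exact absurd (G.fc (by ring) (by ring) h) B2
    · exact absurd (G.fc (by ring) (by ring) h) B3
    · exact absurd (G.fc (by ring) (by ring) h) B4

lemma p1up (G : Grid) (a b : ℤ) (h0 : G.f a b) (h1 : G.f (a+1) (b+1)) :
    G.f (a+2) (b+2) := by
  have R1 : G.f (a-2) (b+3) := (G.p2 a b h0 h1).2
  have B5 : ¬ G.f (a-2) (b+2) := fun h => G.h1b (a-2) (b+2) h (G.fc rfl (by ring) R1)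
  have B6 : ¬ G.f (a-1) (b+2) := fun h => G.h3b a b h0 h1 h
  have B7 : ¬ G.f a (b+2) := fun h => G.h1c a (b+2) h (G.fc (by ring) (by ring) h1)
  have B8 : ¬ G.f (a+1) (b+2) := fun h => G.h1b (a+1) (b+1) h1 (G.fc rfl (by ring) h)
  rcases G.h2u (a-2) (b+2) with h|h|h|h|h
  · exact absurd h B5
  · exact absurd (G.fc (by ring) rfl h) B6
  · exact absurd (G.fc (by ring) rfl h) B7
  · exact absurd (G.fc (by ring) rfl h) B8
  · exact G.fc (by ring) rfl h

lemma p1down (G : Grid) (a b : ℤ) (h0 : G.f a b) (h1 : G.f (a+1) (b+1)) :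
    G.f (a-1) (b-1) := by
  have R2 : G.f (a+3) (b-2) := (G.p2 a b h0 h1).1
  have B4 : ¬ G.f (a+2) (b-1) := fun h => G.h3a a b h0 h1 h
  have B9 : ¬ G.f (a+3) (b-1) := fun h => G.h1b (a+3) (b-2) R2 (G.fc rfl (by ring) h)
  have B10 : ¬ G.f a (b-1) := fun h => G.h1b a (b-1) h (G.fc rfl (by ring) h0)
  have B11 : ¬ G.f (a+1) (b-1) := fun h => G.h1c a b h0 h
  rcases G.h2u (a-1) (b-1) with h|h|h|h|h
  · exact h
  · exact absurd (G.fc (by ring) rfl h) B10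
  · exact absurd (G.fc (by ring) rfl h) B11
  · exact absurd (G.fc (by ring) rfl h) B4
  · exact absurd (G.fc (by ring) rfl h) B9

lemma diag (G : Grid) (h0 : G.f 0 0) (h1 : G.f 1 1) :
    ∀ k : ℤ, G.f k k ∧ G.f (k+1) (k+1) := by
  intro k
  induction k using Int.induction_on with
  | zero => exact ⟨h0, h1⟩
  | succ i ih =>
      refine ⟨ih.2, ?_⟩
      have := G.p1up i i ih.1 ih.2
      exact G.fc (by push_cast; ring) (by push_cast; ring) this
  | pred i ih =>
      refine ⟨?_, ?_⟩
      · have := G.p1down (-(i:ℤ)) (-(i:ℤ)) ih.1 ih.2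
        exact G.fc (by push_cast; ring) (by push_cast; ring) this
      · exact G.fc (by push_cast; ring) (by push_cast; ring) ih.1

lemma diag5 (G : Grid) (h0 : G.f 0 0) (h1 : G.f 1 1) :
    ∀ j k : ℤ, G.f (k + 5*j) k := by
  intro j
  induction j using Int.induction_on with
  | zero => exact fun k => G.fc (by ring) rfl (G.diag h0 h1 k).1
  | succ i ih =>
      intro k
      have pa := ih (k+2)
      have pb := ih (k+3)
      have := (G.p2 (k+2+5*(i:ℤ)) (k+2) pa (G.fc (by ring) (by ring) pb)).1
      exact G.fc (by push_cast; ring) (by push_cast; ring) this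
  | pred i ih =>
      intro k
      have pa := ih (k-3)
      have pb := ih (k-2)
      have := (G.p2 (k-3+5*(-(i:ℤ))) (k-3) pa (G.fc (by ring) (by ring) pb)).2
      exact G.fc (by push_cast; ring) (by push_cast; ring) this

lemma redOf (G : Grid) (h0 : G.f 0 0) (h1 : G.f 1 1) {a b : ℤ} (h : (5:ℤ) ∣ a - b) :
    G.f a b := by
  obtain ⟨j, hj⟩ := h
  exact G.fc (by omega) rfl (G.diag5 h0 h1 j b)

lemma core (G : Grid) (h0 : G.f 0 0) (h1 : G.f 1 1) (a b : ℤ) :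
    G.f a b ↔ (5:ℤ) ∣ a - b := by
  constructor
  · intro hf
    by_contra hnd
    have h5 : (a - b) % 5 = 1 ∨ (a - b) % 5 = 2 ∨ (a - b) % 5 = 3 ∨ (a - b) % 5 = 4 := by
      omega
    rcases h5 with h5|h5|h5|h5
    · exact G.h1a (a-1) b (G.redOf h0 h1 (by omega)) (G.fc (by ring) rfl hf)
    · exact G.h1c (a-1) (b+1) (G.redOf h0 h1 (by omega)) (G.fc (by ring) (by ring) hf)
    · exact G.h1c a b hf (G.redOf h0 h1 (by omega))
    · exact G.h1a a b hf (G.redOf h0 h1 (by omega))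
  · exact G.redOf h0 h1

lemma exist (G : Grid) : ∃ a b, (G.f a b ∧ G.f (a+1) (b+1)) ∨
    (G.f a b ∧ G.f (a+2) (b-1)) ∨ (G.f a b ∧ G.f (a-1) (b+2)) := by
  by_contra hno
  have np1 : ∀ a b, G.f a b → ¬ G.f (a+1) (b+1) := fun a b ha hb =>
    hno ⟨a, b, Or.inl ⟨ha, hb⟩⟩
  have np2 : ∀ a b, G.f a b → ¬ G.f (a+2) (b-1) := fun a b ha hb =>
    hno ⟨a, b, Or.inr (Or.inl ⟨ha, hb⟩)⟩
  have np3 : ∀ a b, G.f a b → ¬ G.f (a-1) (b+2) := fun a b ha hb =>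
    hno ⟨a, b, Or.inr (Or.inr ⟨ha, hb⟩)⟩
  obtain ⟨x, y, hxy⟩ : ∃ x y, G.f x y := by
    rcases G.h2u 0 0 with h|h|h|h|h
    exacts [⟨_, _, h⟩, ⟨_, _, h⟩, ⟨_, _, h⟩, ⟨_, _, h⟩, ⟨_, _, h⟩]
  have B1 : ¬ G.f (x-2) (y+1) := fun h => np2 (x-2) (y+1) h (G.fc (by ring) (by ring) hxy)
  have B2 : ¬ G.f (x-1) (y+1) := fun h => G.h1c (x-1) (y+1) h (G.fc (by ring) (by ring) hxy)
  have B3 : ¬ G.f x (y+1) := fun h => G.h1b x y hxy h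
  have B4 : ¬ G.f (x+1) (y+1) := np1 x y hxy
  have R1 : G.f (x+2) (y+1) := by
    rcases G.h2u (x-2) (y+1) with h|h|h|h|h
    · exact absurd h B1
    · exact absurd (G.fc (by ring) rfl h) B2
    · exact absurd (G.fc (by ring) rfl h) B3
    · exact absurd (G.fc (by ring) rfl h) B4
    · exact G.fc (by ring) rfl h
  have B5 : ¬ G.f (x+1) (y-2) := fun h => np3 (x+1) (y-2) h (G.fc (by ring) (by ring) hxy)
  have B6 : ¬ G.f (x+1) (y-1) := fun h => G.h1c x y hxy (G.fc (by ring) (by ring) h)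
  have B7 : ¬ G.f (x+1) y := fun h => G.h1a x y hxy h
  have R2 : G.f (x+1) (y+2) := by
    rcases G.h2v (x+1) (y-2) with h|h|h|h|h
    · exact absurd h B5
    · exact absurd (G.fc rfl (by ring) h) B6
    · exact absurd (G.fc rfl (by ring) h) B7
    · exact absurd (G.fc rfl (by ring) h) B4
    · exact G.fc rfl (by ring) h
  exact G.h1c (x+1) (y+2) R2 (G.fc (by ring) (by ring) R1)

end Grid

lemma color_notred {c : Plane → Color} {z : Plane} (h : ¬ c z = Color.red) :
    c z = Color.blue := by
  cases hz : c z
  · exact absurd hz h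
  · rfl

lemma innerc (u v : Plane) (hu : ‖u‖ = 1) (hv : ‖v‖ = 1)
    (huv : (inner ℝ u v : ℝ) = 1/2) (x y z w : ℝ) :
    (inner ℝ (x•u + y•v) (z•u + w•v) : ℝ) = x*z + y*w + (x*w + y*z)/2 := by
  have h1 : (inner ℝ u u : ℝ) = 1 := by
    rw [real_inner_self_eq_norm_sq, hu]; norm_num
  have h2 : (inner ℝ v v : ℝ) = 1 := by
    rw [real_inner_self_eq_norm_sq, hv]; norm_num
  have h3 : (inner ℝ v u : ℝ) = 1/2 := by rw [real_inner_comm]; exact huv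
  simp only [inner_add_left, inner_add_right, real_inner_smul_left,
    real_inner_smul_right, h1, h2, h3, huv]
  ring

lemma normc (u v : Plane) (hu : ‖u‖ = 1) (hv : ‖v‖ = 1)
    (huv : (inner ℝ u v : ℝ) = 1/2) (x y : ℝ) :
    ‖x•u + y•v‖ = Real.sqrt (x^2 + x*y + y^2) := by
  rw [← Real.sqrt_sq (norm_nonneg (x•u + y•v))]
  congr 1
  rw [← real_inner_self_eq_norm_sq, innerc u v hu hv huv]
  ring

lemma window {c : Plane → Color} (hblue : ¬ HasBlueL5 c) (q w : Plane)
    (hw : ‖w‖ = 1) :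
    c q = Color.red ∨ c (q + w) = Color.red ∨ c (q + (2:ℝ)•w) = Color.red ∨
      c (q + (3:ℝ)•w) = Color.red ∨ c (q + (4:ℝ)•w) = Color.red := by
  by_contra hc
  push_neg at hc
  obtain ⟨b0, b1, b2, b3, b4⟩ := hc
  refine hblue ⟨q, w, hw, fun j => ?_⟩
  fin_cases j
  · simpa using color_notred b0
  · simpa using color_notred b1
  · simpa using color_notred b2
  · simpa using color_notred b3
  · simpa using color_notred b4

noncomputable def PT2 (p u v : Plane) (s t e g h i : ℤ) (a b : ℤ) : Plane :=
  p + ((s + a*e + b*h : ℤ):ℝ) • u + ((t + a*g + b*i : ℤ):ℝ) • v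

lemma buildGrid (c : Plane → Color) (hred : NoRedL2 c) (hblue : ¬ HasBlueL5 c)
    (p u v : Plane) (hu : ‖u‖ = 1) (hv : ‖v‖ = 1) (huv : (inner ℝ u v : ℝ) = 1 / 2)
    (L : Set Plane) (hL : L = {x : Plane | ∃ m n : ℤ, x = p + (m : ℝ) • u + (n : ℝ) • v})
    (hnotri : ¬ ∃ A B C : Plane, A ∈ L ∧ B ∈ L ∧ C ∈ L ∧
      c A = Color.red ∧ c B = Color.red ∧ c C = Color.red ∧
      dist A B = Real.sqrt 3 ∧ dist B C = Real.sqrt 3 ∧ dist A C = Real.sqrt 3)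
    (s t e g h i : ℤ)
    (E1 : e^2 + e*g + g^2 = 1) (E2 : h^2 + h*i + i^2 = 1)
    (E3 : 2*e*h + 2*g*i + e*i + g*h = 1) :
    ∃ G : Grid, ∀ a b : ℤ,
      G.f a b = (c (PT2 p u v s t e g h i a b) = Color.red) := by
  set u₂ : Plane := (e:ℝ)•u + (g:ℝ)•v with hu₂def
  set v₂ : Plane := (h:ℝ)•u + (i:ℝ)•v with hv₂def
  have hu2 : ‖u₂‖ = 1 := by
    rw [hu₂def, normc u v hu hv huv]
    rw [show ((e:ℝ)^2 + (e:ℝ)*(g:ℝ) + (g:ℝ)^2) = 1 by exact_mod_cast E1]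
    exact Real.sqrt_one
  have hv2 : ‖v₂‖ = 1 := by
    rw [hv₂def, normc u v hu hv huv]
    rw [show ((h:ℝ)^2 + (h:ℝ)*(i:ℝ) + (i:ℝ)^2) = 1 by exact_mod_cast E2]
    exact Real.sqrt_one
  have huv2 : (inner ℝ u₂ v₂ : ℝ) = 1/2 := by
    rw [hu₂def, hv₂def, innerc u v hu hv huv]
    have hE : (2*(e:ℝ)*h + 2*g*i + e*i + g*h : ℝ) = 1 := by exact_mod_cast E3
    linarith
  have hw2 : ‖u₂ - v₂‖ = 1 := by
    rw [show u₂ - v₂ = (1:ℝ)•u₂ + (-1:ℝ)•v₂ by module, normc u₂ v₂ hu2 hv2 huv2]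
    norm_num
  have hmem : ∀ a b : ℤ, PT2 p u v s t e g h i a b ∈ L := by
    intro a b
    rw [hL]
    exact ⟨s + a*e + b*h, t + a*g + b*i, rfl⟩
  have hpt : ∀ a b A B : ℤ, PT2 p u v s t e g h i (a+A) (b+B)
      = PT2 p u v s t e g h i a b + ((A:ℝ)•u₂ + (B:ℝ)•v₂) := by
    intro a b A B
    simp only [PT2, hu₂def, hv₂def]
    push_cast
    module
  have hdist : ∀ a b A B : ℤ, dist (PT2 p u v s t e g h i (a+A) (b+B))
      (PT2 p u v s t e g h i a b) = Real.sqrt ((A:ℝ)^2 + (A:ℝ)*(B:ℝ) + (B:ℝ)^2) := by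
    intro a b A B
    rw [hpt, dist_eq_norm, add_sub_cancel_left, normc u₂ v₂ hu2 hv2 huv2]
  have hone : ∀ a b a' b' : ℤ, ((a'-a)^2 + (a'-a)*(b'-b) + (b'-b)^2 = 1) →
      c (PT2 p u v s t e g h i a b) = Color.red →
      c (PT2 p u v s t e g h i a' b') = Color.red → False := by
    intro a b a' b' hq ha hb
    refine hred _ _ hb ha ?_
    rw [show a' = a + (a'-a) by ring, show b' = b + (b'-b) by ring, hdist]
    rw [show (((a'-a : ℤ)):ℝ)^2 + (((a'-a : ℤ)):ℝ)*(((b'-b : ℤ)):ℝ) + (((b'-b : ℤ)):ℝ)^2 = 1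
      from by exact_mod_cast hq]
    exact Real.sqrt_one
  have hsq3 : ∀ a b a' b' : ℤ, ((a'-a)^2 + (a'-a)*(b'-b) + (b'-b)^2 = 3) →
      dist (PT2 p u v s t e g h i a b) (PT2 p u v s t e g h i a' b') = Real.sqrt 3 := by
    intro a b a' b' hq
    rw [dist_comm, show a' = a + (a'-a) by ring, show b' = b + (b'-b) by ring, hdist]
    congr 1
    exact_mod_cast hq
  have htri : ∀ a b a' b' a'' b'' : ℤ,
      ((a'-a)^2 + (a'-a)*(b'-b) + (b'-b)^2 = 3) →
      ((a''-a')^2 + (a''-a')*(b''-b') + (b''-b')^2 = 3) →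
      ((a''-a)^2 + (a''-a)*(b''-b) + (b''-b)^2 = 3) →
      c (PT2 p u v s t e g h i a b) = Color.red →
      c (PT2 p u v s t e g h i a' b') = Color.red →
      c (PT2 p u v s t e g h i a'' b'') = Color.red → False := by
    intro a b a' b' a'' b'' q1 q2 q3 r1 r2 r3
    exact hnotri ⟨_, _, _, hmem a b, hmem a' b', hmem a'' b'', r1, r2, r3,
      hsq3 a b a' b' q1, hsq3 a' b' a'' b'' q2, hsq3 a b a'' b'' q3⟩
  have hptu : ∀ a b k : ℤ, PT2 p u v s t e g h i (a+k) b
      = PT2 p u v s t e g h i a b + (k:ℝ)•u₂ := by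
    intro a b k
    simp only [PT2, hu₂def]
    push_cast
    module
  have hptv : ∀ a b k : ℤ, PT2 p u v s t e g h i a (b+k)
      = PT2 p u v s t e g h i a b + (k:ℝ)•v₂ := by
    intro a b k
    simp only [PT2, hv₂def]
    push_cast
    module
  have hptw : ∀ a b k : ℤ, PT2 p u v s t e g h i (a+k) (b-k)
      = PT2 p u v s t e g h i a b + (k:ℝ)•(u₂ - v₂) := by
    intro a b k
    simp only [PT2, hu₂def, hv₂def]
    push_cast
    module
  have A2u : ∀ a b : ℤ, c (PT2 p u v s t e g h i a b) = Color.red ∨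
      c (PT2 p u v s t e g h i (a+1) b) = Color.red ∨
      c (PT2 p u v s t e g h i (a+2) b) = Color.red ∨
      c (PT2 p u v s t e g h i (a+3) b) = Color.red ∨
      c (PT2 p u v s t e g h i (a+4) b) = Color.red := by
    intro a b
    rcases window hblue (PT2 p u v s t e g h i a b) u₂ hu2 with hh|hh|hh|hh|hh
    · exact Or.inl hh
    · exact Or.inr (Or.inl (by rw [hptu a b 1]; simpa using hh))
    · exact Or.inr (Or.inr (Or.inl (by rw [hptu a b 2]; simpa using hh)))
    · exact Or.inr (Or.inr (Or.inr (Or.inl (by rw [hptu a b 3]; simpa using hh))))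
    · exact Or.inr (Or.inr (Or.inr (Or.inr (by rw [hptu a b 4]; simpa using hh))))
  have A2v : ∀ a b : ℤ, c (PT2 p u v s t e g h i a b) = Color.red ∨
      c (PT2 p u v s t e g h i a (b+1)) = Color.red ∨
      c (PT2 p u v s t e g h i a (b+2)) = Color.red ∨
      c (PT2 p u v s t e g h i a (b+3)) = Color.red ∨
      c (PT2 p u v s t e g h i a (b+4)) = Color.red := by
    intro a b
    rcases window hblue (PT2 p u v s t e g h i a b) v₂ hv2 with hh|hh|hh|hh|hh
    · exact Or.inl hh
    · exact Or.inr (Or.inl (by rw [hptv a b 1]; simpa using hh))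
    · exact Or.inr (Or.inr (Or.inl (by rw [hptv a b 2]; simpa using hh)))
    · exact Or.inr (Or.inr (Or.inr (Or.inl (by rw [hptv a b 3]; simpa using hh))))
    · exact Or.inr (Or.inr (Or.inr (Or.inr (by rw [hptv a b 4]; simpa using hh))))
  have A2w : ∀ a b : ℤ, c (PT2 p u v s t e g h i a b) = Color.red ∨
      c (PT2 p u v s t e g h i (a+1) (b-1)) = Color.red ∨
      c (PT2 p u v s t e g h i (a+2) (b-2)) = Color.red ∨
      c (PT2 p u v s t e g h i (a+3) (b-3)) = Color.red ∨
      c (PT2 p u v s t e g h i (a+4) (b-4)) = Color.red := by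
    intro a b
    rcases window hblue (PT2 p u v s t e g h i a b) (u₂ - v₂) hw2 with hh|hh|hh|hh|hh
    · exact Or.inl hh
    · exact Or.inr (Or.inl (by rw [hptw a b 1]; simpa using hh))
    · exact Or.inr (Or.inr (Or.inl (by rw [hptw a b 2]; simpa using hh)))
    · exact Or.inr (Or.inr (Or.inr (Or.inl (by rw [hptw a b 3]; simpa using hh))))
    · exact Or.inr (Or.inr (Or.inr (Or.inr (by rw [hptw a b 4]; simpa using hh))))
  let G : Grid :=
  { f := fun a b => c (PT2 p u v s t e g h i a b) = Color.red
    h1a := fun a b => hone a b (a+1) b (by ring)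
    h1b := fun a b => hone a b a (b+1) (by ring)
    h1c := fun a b => hone a b (a+1) (b-1) (by ring)
    h2u := A2u
    h2v := A2v
    h2w := A2w
    h3a := fun a b r0 r1 r2 => htri a b (a+1) (b+1) (a+2) (b-1)
      (by ring) (by ring) (by ring) r0 r1 r2
    h3b := fun a b r0 r1 r2 => htri a b (a+1) (b+1) (a-1) (b+2)
      (by ring) (by ring) (by ring) r0 r1 r2 }
  exact ⟨G, fun a b => rfl⟩

lemma master (c : Plane → Color) (hred : NoRedL2 c) (hblue : ¬ HasBlueL5 c)
    (p u v : Plane) (hu : ‖u‖ = 1) (hv : ‖v‖ = 1) (huv : (inner ℝ u v : ℝ) = 1 / 2)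
    (L : Set Plane) (hL : L = {x : Plane | ∃ m n : ℤ, x = p + (m : ℝ) • u + (n : ℝ) • v})
    (hnotri : ¬ ∃ A B C : Plane, A ∈ L ∧ B ∈ L ∧ C ∈ L ∧
      c A = Color.red ∧ c B = Color.red ∧ c C = Color.red ∧
      dist A B = Real.sqrt 3 ∧ dist B C = Real.sqrt 3 ∧ dist A C = Real.sqrt 3)
    (s t e g h i : ℤ)
    (E1 : e^2 + e*g + g^2 = 1) (E2 : h^2 + h*i + i^2 = 1)
    (E3 : 2*e*h + 2*g*i + e*i + g*h = 1) (E4 : e*i - g*h = 1)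
    (S0 : c (PT2 p u v s t e g h i 0 0) = Color.red)
    (S1 : c (PT2 p u v s t e g h i 1 1) = Color.red) :
    ∃ b ∈ L, ∃ u' v' : Plane, ‖u'‖ = 1 ∧ ‖v'‖ = 1 ∧ (inner ℝ u' v' : ℝ) = 1 / 2 ∧
      L = {x : Plane | ∃ m n : ℤ, x = b + (m : ℝ) • u' + (n : ℝ) • v'} ∧
      ∀ x ∈ L, (c x = Color.red ↔
        ∃ m k : ℤ, ∃ t ∈ ({0, (2 : ℝ) • u' + v'} : Set Plane),
          x = b + t + (m : ℝ) • ((2 : ℝ) • v' - u') + ((5 * k : ℤ) : ℝ) • u') := by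
  set u₂ : Plane := (e:ℝ)•u + (g:ℝ)•v with hu₂def
  set v₂ : Plane := (h:ℝ)•u + (i:ℝ)•v with hv₂def
  have hu2 : ‖u₂‖ = 1 := by
    rw [hu₂def, normc u v hu hv huv]
    rw [show ((e:ℝ)^2 + (e:ℝ)*(g:ℝ) + (g:ℝ)^2) = 1 by exact_mod_cast E1]
    exact Real.sqrt_one
  have hv2 : ‖v₂‖ = 1 := by
    rw [hv₂def, normc u v hu hv huv]
    rw [show ((h:ℝ)^2 + (h:ℝ)*(i:ℝ) + (i:ℝ)^2) = 1 by exact_mod_cast E2]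
    exact Real.sqrt_one
  have huv2 : (inner ℝ u₂ v₂ : ℝ) = 1/2 := by
    rw [hu₂def, hv₂def, innerc u v hu hv huv]
    have hE : (2*(e:ℝ)*h + 2*g*i + e*i + g*h : ℝ) = 1 := by exact_mod_cast E3
    linarith
  have hw2 : ‖u₂ - v₂‖ = 1 := by
    rw [show u₂ - v₂ = (1:ℝ)•u₂ + (-1:ℝ)•v₂ by module, normc u₂ v₂ hu2 hv2 huv2]
    norm_num
  have hmem : ∀ a b : ℤ, PT2 p u v s t e g h i a b ∈ L := by
    intro a b
    rw [hL]
    exact ⟨s + a*e + b*h, t + a*g + b*i, rfl⟩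
  have hpt : ∀ a b A B : ℤ, PT2 p u v s t e g h i (a+A) (b+B)
      = PT2 p u v s t e g h i a b + ((A:ℝ)•u₂ + (B:ℝ)•v₂) := by
    intro a b A B
    simp only [PT2, hu₂def, hv₂def]
    push_cast
    module
  have hdist : ∀ a b A B : ℤ, dist (PT2 p u v s t e g h i (a+A) (b+B))
      (PT2 p u v s t e g h i a b) = Real.sqrt ((A:ℝ)^2 + (A:ℝ)*(B:ℝ) + (B:ℝ)^2) := by
    intro a b A B
    rw [hpt, dist_eq_norm, add_sub_cancel_left, normc u₂ v₂ hu2 hv2 huv2]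
  have hone : ∀ a b a' b' : ℤ, ((a'-a)^2 + (a'-a)*(b'-b) + (b'-b)^2 = 1) →
      c (PT2 p u v s t e g h i a b) = Color.red →
      c (PT2 p u v s t e g h i a' b') = Color.red → False := by
    intro a b a' b' hq ha hb
    refine hred _ _ hb ha ?_
    rw [show a' = a + (a'-a) by ring, show b' = b + (b'-b) by ring, hdist]
    rw [show (((a'-a : ℤ)):ℝ)^2 + (((a'-a : ℤ)):ℝ)*(((b'-b : ℤ)):ℝ) + (((b'-b : ℤ)):ℝ)^2 = 1
      from by exact_mod_cast hq]
    exact Real.sqrt_one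
  have hsq3 : ∀ a b a' b' : ℤ, ((a'-a)^2 + (a'-a)*(b'-b) + (b'-b)^2 = 3) →
      dist (PT2 p u v s t e g h i a b) (PT2 p u v s t e g h i a' b') = Real.sqrt 3 := by
    intro a b a' b' hq
    rw [dist_comm, show a' = a + (a'-a) by ring, show b' = b + (b'-b) by ring, hdist]
    congr 1
    exact_mod_cast hq
  have htri : ∀ a b a' b' a'' b'' : ℤ,
      ((a'-a)^2 + (a'-a)*(b'-b) + (b'-b)^2 = 3) →
      ((a''-a')^2 + (a''-a')*(b''-b') + (b''-b')^2 = 3) →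
      ((a''-a)^2 + (a''-a)*(b''-b) + (b''-b)^2 = 3) →
      c (PT2 p u v s t e g h i a b) = Color.red →
      c (PT2 p u v s t e g h i a' b') = Color.red →
      c (PT2 p u v s t e g h i a'' b'') = Color.red → False := by
    intro a b a' b' a'' b'' q1 q2 q3 r1 r2 r3
    exact hnotri ⟨_, _, _, hmem a b, hmem a' b', hmem a'' b'', r1, r2, r3,
      hsq3 a b a' b' q1, hsq3 a' b' a'' b'' q2, hsq3 a b a'' b'' q3⟩
  have hptu : ∀ a b k : ℤ, PT2 p u v s t e g h i (a+k) b
      = PT2 p u v s t e g h i a b + (k:ℝ)•u₂ := by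
    intro a b k
    simp only [PT2, hu₂def]
    push_cast
    module
  have hptv : ∀ a b k : ℤ, PT2 p u v s t e g h i a (b+k)
      = PT2 p u v s t e g h i a b + (k:ℝ)•v₂ := by
    intro a b k
    simp only [PT2, hv₂def]
    push_cast
    module
  have hptw : ∀ a b k : ℤ, PT2 p u v s t e g h i (a+k) (b-k)
      = PT2 p u v s t e g h i a b + (k:ℝ)•(u₂ - v₂) := by
    intro a b k
    simp only [PT2, hu₂def, hv₂def]
    push_cast
    module
  have A2u : ∀ a b : ℤ, c (PT2 p u v s t e g h i a b) = Color.red ∨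
      c (PT2 p u v s t e g h i (a+1) b) = Color.red ∨
      c (PT2 p u v s t e g h i (a+2) b) = Color.red ∨
      c (PT2 p u v s t e g h i (a+3) b) = Color.red ∨
      c (PT2 p u v s t e g h i (a+4) b) = Color.red := by
    intro a b
    rcases window hblue (PT2 p u v s t e g h i a b) u₂ hu2 with hh|hh|hh|hh|hh
    · exact Or.inl hh
    · exact Or.inr (Or.inl (by rw [hptu a b 1]; simpa using hh))
    · exact Or.inr (Or.inr (Or.inl (by rw [hptu a b 2]; simpa using hh)))
    · exact Or.inr (Or.inr (Or.inr (Or.inl (by rw [hptu a b 3]; simpa using hh))))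
    · exact Or.inr (Or.inr (Or.inr (Or.inr (by rw [hptu a b 4]; simpa using hh))))
  have A2v : ∀ a b : ℤ, c (PT2 p u v s t e g h i a b) = Color.red ∨
      c (PT2 p u v s t e g h i a (b+1)) = Color.red ∨
      c (PT2 p u v s t e g h i a (b+2)) = Color.red ∨
      c (PT2 p u v s t e g h i a (b+3)) = Color.red ∨
      c (PT2 p u v s t e g h i a (b+4)) = Color.red := by
    intro a b
    rcases window hblue (PT2 p u v s t e g h i a b) v₂ hv2 with hh|hh|hh|hh|hh
    · exact Or.inl hh
    · exact Or.inr (Or.inl (by rw [hptv a b 1]; simpa using hh))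
    · exact Or.inr (Or.inr (Or.inl (by rw [hptv a b 2]; simpa using hh)))
    · exact Or.inr (Or.inr (Or.inr (Or.inl (by rw [hptv a b 3]; simpa using hh))))
    · exact Or.inr (Or.inr (Or.inr (Or.inr (by rw [hptv a b 4]; simpa using hh))))
  have A2w : ∀ a b : ℤ, c (PT2 p u v s t e g h i a b) = Color.red ∨
      c (PT2 p u v s t e g h i (a+1) (b-1)) = Color.red ∨
      c (PT2 p u v s t e g h i (a+2) (b-2)) = Color.red ∨
      c (PT2 p u v s t e g h i (a+3) (b-3)) = Color.red ∨
      c (PT2 p u v s t e g h i (a+4) (b-4)) = Color.red := by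
    intro a b
    rcases window hblue (PT2 p u v s t e g h i a b) (u₂ - v₂) hw2 with hh|hh|hh|hh|hh
    · exact Or.inl hh
    · exact Or.inr (Or.inl (by rw [hptw a b 1]; simpa using hh))
    · exact Or.inr (Or.inr (Or.inl (by rw [hptw a b 2]; simpa using hh)))
    · exact Or.inr (Or.inr (Or.inr (Or.inl (by rw [hptw a b 3]; simpa using hh))))
    · exact Or.inr (Or.inr (Or.inr (Or.inr (by rw [hptw a b 4]; simpa using hh))))
  let G : Grid :=
  { f := fun a b => c (PT2 p u v s t e g h i a b) = Color.red
    h1a := fun a b => hone a b (a+1) b (by ring)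
    h1b := fun a b => hone a b a (b+1) (by ring)
    h1c := fun a b => hone a b (a+1) (b-1) (by ring)
    h2u := A2u
    h2v := A2v
    h2w := A2w
    h3a := fun a b r0 r1 r2 => htri a b (a+1) (b+1) (a+2) (b-1)
      (by ring) (by ring) (by ring) r0 r1 r2
    h3b := fun a b r0 r1 r2 => htri a b (a+1) (b+1) (a-1) (b+2)
      (by ring) (by ring) (by ring) r0 r1 r2 }
  have hchar : ∀ a b : ℤ, (c (PT2 p u v s t e g h i a b) = Color.red ↔ (5:ℤ) ∣ a - b) :=
    fun a b => G.core S0 S1 a b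
  have E4r : (e:ℝ)*i - (g:ℝ)*h = 1 := by exact_mod_cast E4
  have huu2 : (inner ℝ u₂ u₂ : ℝ) = 1 := by
    rw [real_inner_self_eq_norm_sq, hu2]; norm_num
  have hvu2 : (inner ℝ v₂ u₂ : ℝ) = 1/2 := by rw [real_inner_comm]; exact huv2
  have hcoord : ∀ a' b' : ℤ, PT2 p u v s t e g h i 0 0 + (a':ℝ)•(v₂ - u₂) + (b':ℝ)•(-u₂)
      = PT2 p u v s t e g h i (-a'-b') a' := by
    intro a' b'
    simp only [PT2, hu₂def, hv₂def]
    push_cast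
    module
  have hlat : L = {x : Plane | ∃ m n : ℤ,
      x = PT2 p u v s t e g h i 0 0 + (m:ℝ)•(v₂ - u₂) + (n:ℝ)•(-u₂)} := by
    rw [hL]
    ext x
    simp only [Set.mem_setOf_eq]
    constructor
    · rintro ⟨m, n, rfl⟩
      refine ⟨-g*(m-s) + e*(n-t), -(i-g)*(m-s) + (h-e)*(n-t), ?_⟩
      simp only [PT2, hu₂def, hv₂def]
      push_cast
      match_scalars <;>
        first
          | ring1
          | linear_combination ((s:ℝ)-(m:ℝ)) * E4r
          | linear_combination ((t:ℝ)-(n:ℝ)) * E4r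
    · rintro ⟨m, n, rfl⟩
      refine ⟨s + m*(h-e) + n*(-e), t + m*(i-g) + n*(-g), ?_⟩
      simp only [PT2, hu₂def, hv₂def]
      push_cast
      module
  refine ⟨PT2 p u v s t e g h i 0 0, hmem 0 0, v₂ - u₂, -u₂, ?_, ?_, ?_, hlat, ?_⟩
  · rw [show v₂ - u₂ = (-1:ℝ)•u₂ + (1:ℝ)•v₂ by module, normc u₂ v₂ hu2 hv2 huv2]
    norm_num
  · rw [norm_neg]; exact hu2
  · simp only [inner_sub_left, inner_neg_right, huu2, hvu2]
    norm_num
  · intro x hx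
    rw [hlat] at hx
    obtain ⟨m', n', rfl⟩ := hx
    constructor
    · intro hr
      rw [hcoord m' n'] at hr
      have h5 : (5:ℤ) ∣ (-m'-n') - m' := (hchar _ _).mp hr
      rcases Int.even_or_odd n' with ⟨mm, hmm⟩ | ⟨mm, hmm⟩
      · refine ⟨mm, (m'+mm)/5, 0, Set.mem_insert _ _, ?_⟩
        have e1 : (m':ℝ) = 5*(((m'+mm)/5 : ℤ):ℝ) - mm := by
          exact_mod_cast (by omega : m' = 5*((m'+mm)/5) - mm)
        have e2 : (n':ℝ) = 2*(mm:ℝ) := by exact_mod_cast (by omega : n' = 2*mm)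
        rw [e1, e2]
        push_cast
        module
      · refine ⟨mm, (m'+mm-2)/5, (2:ℝ)•(v₂ - u₂) + -u₂,
          Set.mem_insert_iff.mpr (Or.inr rfl), ?_⟩
        have e1 : (m':ℝ) = 5*(((m'+mm-2)/5 : ℤ):ℝ) - mm + 2 := by
          exact_mod_cast (by omega : m' = 5*((m'+mm-2)/5) - mm + 2)
        have e2 : (n':ℝ) = 2*(mm:ℝ) + 1 := by exact_mod_cast hmm
        rw [e1, e2]
        push_cast
        module
    · rintro ⟨m, k, tt, htt, heq⟩
      rw [heq]
      simp only [Set.mem_insert_iff, Set.mem_singleton_iff] at htt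
      rcases htt with rfl | rfl
      · rw [show PT2 p u v s t e g h i 0 0 + 0 + (m:ℝ)•((2:ℝ)•(-u₂) - (v₂ - u₂))
            + ((5*k : ℤ):ℝ)•(v₂ - u₂) = PT2 p u v s t e g h i (-m-5*k) (5*k-m) from by
          simp only [PT2, hu₂def, hv₂def]; push_cast; module]
        exact (hchar _ _).mpr (by omega)
      · rw [show PT2 p u v s t e g h i 0 0 + ((2:ℝ)•(v₂ - u₂) + -u₂)
            + (m:ℝ)•((2:ℝ)•(-u₂) - (v₂ - u₂)) + ((5*k : ℤ):ℝ)•(v₂ - u₂)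
            = PT2 p u v s t e g h i (-m-5*k-3) (5*k-m+2) from by
          simp only [PT2, hu₂def, hv₂def]; push_cast; module]
        exact (hchar _ _).mpr (by omega)

/-- no red ℓ₂ and no blue ℓ₅; if a unit triangular lattice 𝔏
contains no red equilateral triangle of side √3, then the colouring of 𝔏 is the
unique colouring of Figure 8. -/
theorem stmt_11 (c : Plane → Color) (hred : NoRedL2 c) (hblue : ¬ HasBlueL5 c)
    (p u v : Plane) (hu : ‖u‖ = 1) (hv : ‖v‖ = 1) (huv : (inner ℝ u v : ℝ) = 1 / 2)
    (L : Set Plane) (hL : L = {x : Plane | ∃ m n : ℤ, x = p + (m : ℝ) • u + (n : ℝ) • v})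
    (hnotri : ¬ ∃ A B C : Plane, A ∈ L ∧ B ∈ L ∧ C ∈ L ∧
      c A = Color.red ∧ c B = Color.red ∧ c C = Color.red ∧
      dist A B = Real.sqrt 3 ∧ dist B C = Real.sqrt 3 ∧ dist A C = Real.sqrt 3) :
    ∃ b ∈ L, ∃ u' v' : Plane, ‖u'‖ = 1 ∧ ‖v'‖ = 1 ∧ (inner ℝ u' v' : ℝ) = 1 / 2 ∧
      L = {x : Plane | ∃ m n : ℤ, x = b + (m : ℝ) • u' + (n : ℝ) • v'} ∧
      ∀ x ∈ L, (c x = Color.red ↔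
        ∃ m k : ℤ, ∃ t ∈ ({0, (2 : ℝ) • u' + v'} : Set Plane),
          x = b + t + (m : ℝ) • ((2 : ℝ) • v' - u') + ((5 * k : ℤ) : ℝ) • u') := by
  obtain ⟨G₀, hG₀⟩ := buildGrid c hred hblue p u v hu hv huv L hL hnotri 0 0 1 0 0 1
    (by norm_num) (by norm_num) (by norm_num)
  obtain ⟨x, y, hcase⟩ := G₀.exist
  rcases hcase with ⟨h0, h1⟩ | ⟨h0, h1⟩ | ⟨h0, h1⟩
  · rw [hG₀] at h0 h1
    refine master c hred hblue p u v hu hv huv L hL hnotri x y 1 0 0 1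
      (by norm_num) (by norm_num) (by norm_num) (by norm_num) ?_ ?_
    · rw [show PT2 p u v x y 1 0 0 1 0 0 = PT2 p u v 0 0 1 0 0 1 x y from by
        simp only [PT2]; push_cast; module]
      exact h0
    · rw [show PT2 p u v x y 1 0 0 1 1 1 = PT2 p u v 0 0 1 0 0 1 (x+1) (y+1) from by
        simp only [PT2]; push_cast; module]
      exact h1
  · rw [hG₀] at h0 h1
    refine master c hred hblue p u v hu hv huv L hL hnotri (x+2) (y-1) (-1) 1 (-1) 0
      (by norm_num) (by norm_num) (by norm_num) (by norm_num) ?_ ?_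
    · rw [show PT2 p u v (x+2) (y-1) (-1) 1 (-1) 0 0 0 = PT2 p u v 0 0 1 0 0 1 (x+2) (y-1) from by
        simp only [PT2]; push_cast; module]
      exact h1
    · rw [show PT2 p u v (x+2) (y-1) (-1) 1 (-1) 0 1 1 = PT2 p u v 0 0 1 0 0 1 x y from by
        simp only [PT2]; push_cast; module]
      exact h0
  · rw [hG₀] at h0 h1
    refine master c hred hblue p u v hu hv huv L hL hnotri x y 0 1 (-1) 1
      (by norm_num) (by norm_num) (by norm_num) (by norm_num) ?_ ?_
    · rw [show PT2 p u v x y 0 1 (-1) 1 0 0 = PT2 p u v 0 0 1 0 0 1 x y from by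
        simp only [PT2]; push_cast; module]
      exact h0
    · rw [show PT2 p u v x y 0 1 (-1) 1 1 1 = PT2 p u v 0 0 1 0 0 1 (x-1) (y+2) from by
        simp only [PT2]; push_cast; module]
      exact h1
end
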